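/- Let 0<α<1 and define ρ on (−1,∞) by ρ(t)=Γ(t+1)/Γ(t+1−α) for t≠α−1 (with Γ(t+1−α) for −1<t<α−1 given by the meromorphic continuation of the Gamma function) and ρ(α−1)=0. Then ρ is continuous and strictly monotone increasing on (−1,∞), ρ(t)→−∞ as t→−1+, and ρ(t)→+∞ as t→+∞; hence ρ is a bijection from (−1,∞) onto ℝ, and in particular for every λ∈ℝ the equation Γ(t+1)/Γ(t+1−α)=λ has a unique solution t=γ(λ) in (−1,∞). -/

import Mathlib

open Filter Set Topology


open Filter

/-- The function `ρ(t) = Γ(t+1)/Γ(t+1-α)` on `(-1,∞)`.  Here `Real.Gamma` is the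
meromorphically continued Gamma function, which vanishes at its poles; hence at the
pole `t = α - 1` of the denominator this definition automatically yields `ρ(α-1) = 0`,
as required. -/
noncomputable def rhoGamma (α t : ℝ) : ℝ :=
  Real.Gamma (t + 1) / Real.Gamma (t + 1 - α)

lemma convex_shift_le {f : ℝ → ℝ} (hf : ConvexOn ℝ (Set.Ioi 0) f)
    {x y h : ℝ} (hx : 0 < x) (hxy : x ≤ y) (hh : 0 < h) :
    f (x + h) - f x ≤ f (y + h) - f y := by
  rcases eq_or_lt_of_le hxy with rfl | hlt
  · exact le_rfl
  set L : ℝ := y + h - x with hL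
  have hLpos : 0 < L := by simp only [hL]; linarith
  have hy : 0 < y := lt_of_le_of_lt hx.le hlt
  have hmemx : x ∈ Set.Ioi (0:ℝ) := hx
  have hmemyh : y + h ∈ Set.Ioi (0:ℝ) := by simp; linarith
  have ha1 : (0:ℝ) ≤ 1 - h / L := by
    rw [sub_nonneg, div_le_one hLpos]; linarith
  have hb1 : (0:ℝ) ≤ h / L := le_of_lt (div_pos hh hLpos)
  have hcomb1 : (1 - h / L) • x + (h / L) • (y + h) = x + h := by
    simp only [smul_eq_mul]; field_simp; ring
  have h1 := hf.2 hmemx hmemyh ha1 hb1 (by ring)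
  rw [hcomb1] at h1
  simp only [smul_eq_mul] at h1
  have hb2 : (0:ℝ) ≤ (y - x) / L := div_nonneg (by linarith) hLpos.le
  have hcomb2 : (h / L) • x + ((y - x) / L) • (y + h) = y := by
    simp only [smul_eq_mul]; field_simp; ring
  have hab2 : h / L + (y - x) / L = 1 := by
    field_simp; simp only [hL]; ring
  have h2 := hf.2 hmemx hmemyh hb1 hb2 hab2
  rw [hcomb2] at h2
  simp only [smul_eq_mul] at h2
  have hsum : (1 - h / L) * f x + h / L * f (y + h) +
      (h / L * f x + (y - x) / L * f (y + h)) = f x + f (y + h) := by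
    linear_combination (f (y + h)) * hab2
  linarith

lemma gamma_cross {x y h : ℝ} (hx : 0 < x) (hxy : x ≤ y) (hh : 0 < h) :
    Real.Gamma (x + h) * Real.Gamma y ≤ Real.Gamma (y + h) * Real.Gamma x := by
  have hy : 0 < y := lt_of_lt_of_le hx hxy
  have hxh : 0 < x + h := by linarith
  have hyh : 0 < y + h := by linarith
  have key := convex_shift_le Real.convexOn_log_Gamma hx hxy hh
  simp only [Function.comp_apply] at key
  have p1 := Real.Gamma_pos_of_pos hx
  have p2 := Real.Gamma_pos_of_pos hy
  have p3 := Real.Gamma_pos_of_pos hxh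
  have p4 := Real.Gamma_pos_of_pos hyh
  have hlog : Real.log (Real.Gamma (x+h) * Real.Gamma y)
      ≤ Real.log (Real.Gamma (y+h) * Real.Gamma x) := by
    rw [Real.log_mul p3.ne' p2.ne', Real.log_mul p4.ne' p1.ne']
    linarith
  exact (Real.log_le_log_iff (by positivity) (by positivity)).mp hlog

lemma rho_eq (α t : ℝ) :
    rhoGamma α t = (t + 1 - α) * Real.Gamma (t + 1) / Real.Gamma (t + 2 - α) := by
  by_cases hc : t + 1 - α = 0
  · rw [rhoGamma, hc, Real.Gamma_zero, div_zero, zero_mul, zero_div]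
  · have h2 : t + 2 - α = (t + 1 - α) + 1 := by ring
    rw [rhoGamma, h2, Real.Gamma_add_one hc, mul_div_mul_left _ _ hc]

/-- **Strict monotonicity and bijectivity of `ρ`.**  For `0 < α < 1`, the function
`ρ(t) = Γ(t+1)/Γ(t+1-α)` is continuous and strictly increasing on `(-1,∞)`, tends to
`-∞` as `t → -1⁺` and to `+∞` as `t → +∞`; hence it maps `(-1,∞)` bijectively onto `ℝ`,
and for every `λ ∈ ℝ` the equation `ρ(t) = λ` has a unique solution `t = γ(λ) ∈ (-1,∞)`. -/
theorem rhoGamma_strictMono_bijective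
    (α : ℝ) (hα : 0 < α) (hα1 : α < 1) :
    ContinuousOn (rhoGamma α) (Set.Ioi (-1 : ℝ)) ∧
    StrictMonoOn (rhoGamma α) (Set.Ioi (-1 : ℝ)) ∧
    Tendsto (rhoGamma α) (nhdsWithin (-1 : ℝ) (Set.Ioi (-1 : ℝ))) atBot ∧
    Tendsto (rhoGamma α) atTop atTop ∧
    Set.BijOn (rhoGamma α) (Set.Ioi (-1 : ℝ)) Set.univ ∧
    ∀ lam : ℝ, ∃! t : ℝ, t ∈ Set.Ioi (-1 : ℝ) ∧ rhoGamma α t = lam := by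
  -- auxiliary function
  set G : ℝ → ℝ := fun t => Real.Gamma (t + 1) / Real.Gamma (t + 2 - α) with hG
  have hGnum : ∀ t : ℝ, -1 < t → 0 < Real.Gamma (t + 1) :=
    fun t ht => Real.Gamma_pos_of_pos (by linarith)
  have hGden : ∀ t : ℝ, -1 < t → 0 < Real.Gamma (t + 2 - α) :=
    fun t ht => Real.Gamma_pos_of_pos (by linarith)
  have hGpos : ∀ t : ℝ, -1 < t → 0 < G t :=
    fun t ht => div_pos (hGnum t ht) (hGden t ht)
  have hrho : ∀ t : ℝ, rhoGamma α t = (t + 1 - α) * G t := by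
    intro t
    rw [rho_eq, hG, mul_div_assoc]
  -- G is antitone
  have hGanti : ∀ s t : ℝ, -1 < s → s ≤ t → G t ≤ G s := by
    intro s t hs hst
    have hc := gamma_cross (x := s + 1) (y := t + 1) (h := 1 - α)
      (by linarith) (by linarith) (by linarith)
    have e1 : s + 1 + (1 - α) = s + 2 - α := by ring
    have e2 : t + 1 + (1 - α) = t + 2 - α := by ring
    rw [e1, e2] at hc
    rw [hG]
    rw [div_le_div_iff₀ (hGden t (by linarith)) (hGden s hs)]
    linarith [hc]
  -- rhoGamma is monotone on (α-1, ∞)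
  have hmono : ∀ s t : ℝ, α - 1 < s → s ≤ t → rhoGamma α s ≤ rhoGamma α t := by
    intro s t hs hst
    have hsα : 0 < s + 1 - α := by linarith
    have htα : 0 < t + 1 - α := by linarith
    have hc := gamma_cross (x := s + 1 - α) (y := t + 1 - α) (h := α)
      hsα (by linarith) hα
    have e1 : s + 1 - α + α = s + 1 := by ring
    have e2 : t + 1 - α + α = t + 1 := by ring
    rw [e1, e2] at hc
    rw [rhoGamma, rhoGamma,
      div_le_div_iff₀ (Real.Gamma_pos_of_pos hsα) (Real.Gamma_pos_of_pos htα)]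
    linarith [hc]
  -- shift identity
  have hshift : ∀ t : ℝ, -1 < t → rhoGamma α (t + 1) = (t + 1) * G t := by
    intro t ht
    have h1 : t + 1 + 1 = (t + 1) + 1 := by ring
    have h2 : t + 1 + 1 - α = t + 2 - α := by ring
    rw [rhoGamma, h1, Real.Gamma_add_one (by linarith : t + 1 ≠ 0), h2, hG]
    rw [mul_div_assoc]
  -- continuity
  have hcont : ContinuousOn (rhoGamma α) (Set.Ioi (-1 : ℝ)) := by
    have hF : ContinuousOn (fun t : ℝ => (t + 1 - α) * Real.Gamma (t + 1) / Real.Gamma (t + 2 - α))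
        (Set.Ioi (-1 : ℝ)) := by
      intro t ht
      have ht' : (-1 : ℝ) < t := ht
      apply ContinuousAt.continuousWithinAt
      have c1 : ContinuousAt (fun t : ℝ => Real.Gamma (t + 1)) t := by
        apply ContinuousAt.comp (g := Real.Gamma)
        · exact (Real.differentiableAt_Gamma (fun m => by
            have h0 : (0:ℝ) ≤ m := Nat.cast_nonneg m
            intro h; linarith)).continuousAt
        · exact (continuous_id.add continuous_const).continuousAt
      have c2 : ContinuousAt (fun t : ℝ => Real.Gamma (t + 2 - α)) t := by
        apply ContinuousAt.comp (g := Real.Gamma)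
        · exact (Real.differentiableAt_Gamma (fun m => by
            have h0 : (0:ℝ) ≤ m := Nat.cast_nonneg m
            intro h; linarith)).continuousAt
        · exact ((continuous_id.add continuous_const).sub continuous_const).continuousAt
      exact (((continuous_id.add continuous_const).sub continuous_const).continuousAt.mul
        c1).div c2 (hGden t ht').ne'
    exact ContinuousOn.congr hF (fun t _ => rho_eq α t)
  -- strict monotonicity
  have hsm : StrictMonoOn (rhoGamma α) (Set.Ioi (-1 : ℝ)) := by
    intro s hs t ht hst
    have hs' : (-1:ℝ) < s := hs
    have ht' : (-1:ℝ) < t := ht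
    by_cases hspos : α - 1 < s
    · -- positive side
      have hle := hmono s t hspos hst.le
      rcases lt_or_eq_of_le hle with hlt | heq
      · exact hlt
      · exfalso
        have hsα : 0 < s + 1 - α := by linarith
        have htα : 0 < t + 1 - α := by linarith
        have hcpos : 0 < rhoGamma α s := by
          rw [hrho]; exact mul_pos hsα (hGpos s hs')
        have hGs : G s = rhoGamma α s / (s + 1 - α) := by
          rw [hrho]; field_simp
        have hGt : G t = rhoGamma α s / (t + 1 - α) := by
          rw [heq, hrho]; field_simp
        have hm2 := hmono (s + 1) (t + 1) (by linarith) (by linarith)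
        rw [hshift s hs', hshift t ht', hGs, hGt] at hm2
        set c := rhoGamma α s
        have e1 : (s + 1) * (c / (s + 1 - α)) = (s + 1) * c / (s + 1 - α) := by ring
        have e2 : (t + 1) * (c / (t + 1 - α)) = (t + 1) * c / (t + 1 - α) := by ring
        rw [e1, e2, div_le_div_iff₀ hsα htα] at hm2
        · nlinarith [mul_pos (mul_pos hcpos hα) (sub_pos.mpr hst)]
    · push_neg at hspos
      by_cases htpos : α - 1 < t
      · -- cross case : rhoGamma s ≤ 0 < rhoGamma t
        have h1 : rhoGamma α s ≤ 0 := by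
          rw [hrho]
          exact mul_nonpos_of_nonpos_of_nonneg (by linarith) (hGpos s hs').le
        have h2 : 0 < rhoGamma α t := by
          rw [hrho]; exact mul_pos (by linarith) (hGpos t ht')
        linarith
      · -- negative side
        push_neg at htpos
        have hslt : s < α - 1 := lt_of_lt_of_le hst htpos
        have hGst := hGanti s t hs' hst.le
        have step1 : (s + 1 - α) * G s < (t + 1 - α) * G s :=
          mul_lt_mul_of_pos_right (by linarith) (hGpos s hs')
        have step2 : (t + 1 - α) * G s ≤ (t + 1 - α) * G t :=
          mul_le_mul_of_nonpos_left hGst (by linarith)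
        rw [hrho, hrho]
        linarith
  -- tendsto atBot
  have hbot : Tendsto (rhoGamma α) (nhdsWithin (-1 : ℝ) (Set.Ioi (-1 : ℝ))) atBot := by
    have hΓcont : ∀ x : ℝ, 0 < x → ContinuousAt Real.Gamma x := by
      intro x hx
      exact (Real.differentiableAt_Gamma (fun m => by
        have h0 : (0:ℝ) ≤ m := Nat.cast_nonneg m
        intro h; linarith)).continuousAt
    have hfac : Tendsto (fun t : ℝ => (t + 1 - α) / Real.Gamma (t + 2 - α))
        (nhdsWithin (-1 : ℝ) (Set.Ioi (-1 : ℝ))) (𝓝 (-α / Real.Gamma (1 - α))) := by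
      apply Tendsto.mono_left _ nhdsWithin_le_nhds
      have c2 : ContinuousAt (fun t : ℝ => Real.Gamma (t + 2 - α)) (-1) := by
        apply ContinuousAt.comp (g := Real.Gamma)
        · have : (-1:ℝ) + 2 - α = 1 - α := by ring
          rw [this]
          exact hΓcont _ (by linarith)
        · exact ((continuous_id.add continuous_const).sub continuous_const).continuousAt
      have c1 : ContinuousAt (fun t : ℝ => (t + 1 - α) / Real.Gamma (t + 2 - α)) (-1) := by
        apply ContinuousAt.div
          (((continuous_id.add continuous_const).sub continuous_const).continuousAt) c2
        have : (-1:ℝ) + 2 - α = 1 - α := by ring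
        rw [this]
        exact (Real.Gamma_pos_of_pos (by linarith)).ne'
      have := c1.tendsto
      have e : (-1:ℝ) + 1 - α = -α := by ring
      have e2 : (-1:ℝ) + 2 - α = 1 - α := by ring
      rw [e, e2] at this
      exact this
    have hΓ0 : Tendsto Real.Gamma (nhdsWithin (0:ℝ) (Set.Ioi 0)) atTop := by
      have hmain : Tendsto (fun x : ℝ => Real.Gamma (x + 1) * x⁻¹)
          (nhdsWithin (0:ℝ) (Set.Ioi 0)) atTop := by
        apply Tendsto.pos_mul_atTop one_pos
        · have c1 : ContinuousAt (fun x : ℝ => Real.Gamma (x + 1)) 0 := by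
            apply ContinuousAt.comp (g := Real.Gamma)
            · rw [show (0:ℝ) + 1 = 1 by ring]
              exact hΓcont 1 one_pos
            · exact (continuous_id.add continuous_const).continuousAt
          have := c1.tendsto
          rw [show (0:ℝ) + 1 = 1 by ring, Real.Gamma_one] at this
          exact this.mono_left nhdsWithin_le_nhds
        · exact tendsto_inv_nhdsGT_zero
      apply hmain.congr'
      filter_upwards [self_mem_nhdsWithin] with x hx
      have hx' : 0 < x := hx
      rw [Real.Gamma_add_one hx'.ne']
      field_simp
    have hmap : Tendsto (fun t : ℝ => t + 1)
        (nhdsWithin (-1 : ℝ) (Set.Ioi (-1 : ℝ))) (nhdsWithin (0:ℝ) (Set.Ioi 0)) := by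
      apply tendsto_nhdsWithin_of_tendsto_nhds_of_eventually_within
      · have : Tendsto (fun t : ℝ => t + 1) (𝓝 (-1:ℝ)) (𝓝 ((-1:ℝ) + 1)) :=
          (continuous_id.add continuous_const).continuousAt
        norm_num at this
        exact this.mono_left nhdsWithin_le_nhds
      · filter_upwards [self_mem_nhdsWithin] with x hx
        simp only [Set.mem_Ioi] at hx ⊢
        linarith
    have hΓtop : Tendsto (fun t : ℝ => Real.Gamma (t + 1))
        (nhdsWithin (-1 : ℝ) (Set.Ioi (-1 : ℝ))) atTop := hΓ0.comp hmap
    have hneg : -α / Real.Gamma (1 - α) < 0 :=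
      div_neg_of_neg_of_pos (by linarith) (Real.Gamma_pos_of_pos (by linarith))
    have := Filter.Tendsto.neg_mul_atTop hneg hfac hΓtop
    apply this.congr
    intro t
    rw [rho_eq]
    ring
  -- tendsto atTop
  have htop : Tendsto (rhoGamma α) atTop atTop := by
    have hbound : ∀ᶠ t in atTop, (t - α) ^ α ≤ rhoGamma α t := by
      filter_upwards [eventually_gt_atTop (α + 1)] with t ht
      have h1 : 0 < t - α := by linarith
      have h2 : 0 < t + 1 - α := by linarith
      have h3 : 0 < t + 1 := by linarith
      have h1a : (0:ℝ) < 1 + α := by linarith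
      have hmem1 : t - α ∈ Set.Ioi (0:ℝ) := h1
      have hmem2 : t + 1 ∈ Set.Ioi (0:ℝ) := h3
      have ha : (0:ℝ) ≤ α / (1 + α) := by positivity
      have hb : (0:ℝ) ≤ 1 / (1 + α) := by positivity
      have hab : α / (1 + α) + 1 / (1 + α) = 1 := by
        rw [← add_div, add_comm, div_self h1a.ne']
      have hcvx := Real.convexOn_log_Gamma.2 hmem1 hmem2 ha hb hab
      have hcomb : (α / (1 + α)) • (t - α) + (1 / (1 + α)) • (t + 1) = t + 1 - α := by
        simp only [smul_eq_mul]; field_simp; ring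
      rw [hcomb] at hcvx
      simp only [smul_eq_mul, Function.comp_apply] at hcvx
      set u := Real.log (Real.Gamma (t - α)) with hu
      set v := Real.log (Real.Gamma (t + 1 - α)) with hv
      set w := Real.log (Real.Gamma (t + 1)) with hw
      have hid : (1 + α) * (α / (1 + α) * u + 1 / (1 + α) * w) = α * u + w := by
        field_simp
      have hcvx' : (1 + α) * v ≤ α * u + w := by
        calc (1 + α) * v ≤ (1 + α) * (α / (1 + α) * u + 1 / (1 + α) * w) :=
              mul_le_mul_of_nonneg_left hcvx h1a.le
          _ = α * u + w := hid
      have hlog : Real.log (t - α) = v - u := by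
        have hg : Real.Gamma (t - α + 1) = (t - α) * Real.Gamma (t - α) :=
          Real.Gamma_add_one h1.ne'
        rw [show t - α + 1 = t + 1 - α by ring] at hg
        rw [hv, hu, hg, Real.log_mul h1.ne' (Real.Gamma_pos_of_pos h1).ne']
        ring
      have hkey : α * Real.log (t - α) ≤ w - v := by
        rw [hlog]; nlinarith [hcvx']
      have hrexp : rhoGamma α t = Real.exp (w - v) := by
        rw [rhoGamma, Real.exp_sub, hw, hv, Real.exp_log (Real.Gamma_pos_of_pos h3),
          Real.exp_log (Real.Gamma_pos_of_pos h2)]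
      have hpexp : (t - α) ^ α = Real.exp (α * Real.log (t - α)) := by
        rw [Real.rpow_def_of_pos h1, mul_comm]
      rw [hrexp, hpexp]
      exact Real.exp_le_exp.mpr hkey
    have hpow : Tendsto (fun t : ℝ => (t - α) ^ α) atTop atTop := by
      have := (tendsto_rpow_atTop hα).comp
        (tendsto_atTop_add_const_right atTop (-α) tendsto_id)
      apply this.congr
      intro t
      simp [Function.comp, sub_eq_add_neg]
    exact tendsto_atTop_mono' atTop hbound hpow
  -- existence of solutions
  have hex : ∀ lam : ℝ, ∃ t ∈ Set.Ioi (-1 : ℝ), rhoGamma α t = lam := by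
    intro lam
    obtain ⟨a, halt, ha⟩ :=
      ((hbot.eventually (eventually_lt_atBot lam)).and self_mem_nhdsWithin).exists
    obtain ⟨b, hblam, hab⟩ :=
      ((htop.eventually (eventually_ge_atTop lam)).and (eventually_ge_atTop a)).exists
    have hicc : Set.Icc a b ⊆ Set.Ioi (-1 : ℝ) := fun x hx => lt_of_lt_of_le ha hx.1
    have := intermediate_value_Icc hab (hcont.mono hicc)
    obtain ⟨t, htmem, htval⟩ := this ⟨halt.le, hblam⟩
    exact ⟨t, hicc htmem, htval⟩
  refine ⟨hcont, hsm, hbot, htop, ⟨fun x _ => trivial, hsm.injOn, fun lam _ => ?_⟩, fun lam => ?_⟩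
  · obtain ⟨t, ht, htv⟩ := hex lam
    exact ⟨t, ht, htv⟩
  · obtain ⟨t, ht, htv⟩ := hex lam
    exact ⟨t, ⟨ht, htv⟩, fun u ⟨hu, huv⟩ => hsm.injOn hu ht (huv.trans htv.symm)⟩
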